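/- Let l, r ≥ 1 be integers, let R = {1, 2, ..., r} ∪ {−1, −2, ..., −l} ⊆ ℤ, and let m = min{l, r}. Then for every q ≥ 2, the supremum of R_q(X) over all R-recoverable systems X over alphabets of size q equals m/(m+1). -/

import Mathlib

open Filter Finset


/-- An `R`-recoverable system on `ℤ`: every symbol `x_i` is a function of the
symbols in positions `i + R`. -/
def IsRecoverable {Q : Type*} (R : Set ℤ) (X : Set (ℤ → Q)) : Prop :=
  ∀ i : ℤ, ∃ f : (ℤ → Q) → Q,
    (∀ x y : ℤ → Q, (∀ j ∈ R, x (i + j) = y (i + j)) → f x = f y) ∧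
    ∀ x ∈ X, f x = x i

/-- `|B_n(X)|`: the number of restrictions of elements of `X` to `{0, …, n−1}`. -/
noncomputable def blockCount {Q : Type*} (X : Set (ℤ → Q)) (n : ℕ) : ℕ :=
  Nat.card ↥((fun x : ℤ → Q => fun i : Fin n => x ((i : ℕ) : ℤ)) '' X)

/-- The rate `R_q(X) = limsup_{n→∞} (1/n) log_q |B_n(X)|`. -/
noncomputable def rate (q : ℕ) {Q : Type*} (X : Set (ℤ → Q)) : ℝ :=
  Filter.limsup (fun n : ℕ => Real.logb q (blockCount X n) / n) Filter.atTop


lemma blockCount_le_pow {Q : Type*} [Fintype Q] {R : Set ℤ} {X : Set (ℤ → Q)}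
    (hX : IsRecoverable R X) (n : ℕ) (U : Finset ℤ) (rk : ℤ → ℕ)
    (hUsub : ∀ i ∈ U, 0 ≤ i ∧ i < (n : ℤ))
    (hU : ∀ i ∈ U, ∀ j ∈ R,
      0 ≤ i + j ∧ i + j < (n : ℤ) ∧ (i + j ∈ U → rk (i + j) < rk i)) :
    blockCount X n ≤ Fintype.card Q ^ (n - U.card) := by
  classical
  set T := ((fun x : ℤ → Q => fun i : Fin n => x ((i : ℕ) : ℤ)) '' X) with hT
  set S : Finset (Fin n) :=
    Finset.univ \ (Finset.univ.filter (fun a : Fin n => ((a : ℕ) : ℤ) ∈ U)) with hS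
  have key : ∀ x ∈ X, ∀ y ∈ X,
      (∀ a : Fin n, ((a : ℕ) : ℤ) ∉ U → x ((a : ℕ) : ℤ) = y ((a : ℕ) : ℤ)) →
      ∀ k : ℕ, ∀ i : ℤ, 0 ≤ i → i < (n : ℤ) → rk i ≤ k → x i = y i := by
    intro x hx y hy hagree k
    induction k using Nat.strong_induction_on with
    | _ k ih =>
      intro i h0 h1 hk
      by_cases hiU : i ∈ U
      · obtain ⟨f, hloc, hf⟩ := hX i
        have hxy : ∀ j ∈ R, x (i + j) = y (i + j) := by
          intro j hj
          obtain ⟨hj0, hj1, hjU⟩ := hU i hiU j hj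
          by_cases hmem : i + j ∈ U
          · exact ih (rk (i + j)) (lt_of_lt_of_le (hjU hmem) hk) _ hj0 hj1 le_rfl
          · have hlt : (i + j).toNat < n := by omega
            have := hagree ⟨(i + j).toNat, hlt⟩
              (by simpa [Int.toNat_of_nonneg hj0] using hmem)
            simpa [Int.toNat_of_nonneg hj0] using this
        rw [← hf x hx, ← hf y hy]
        exact hloc x y hxy
      · have hlt : i.toNat < n := by omega
        have := hagree ⟨i.toNat, hlt⟩ (by simpa [Int.toNat_of_nonneg h0] using hiU)
        simpa [Int.toNat_of_nonneg h0] using this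
  have hinj : Function.Injective (fun b : ↥T => (fun s : ↥S => b.1 s.1)) := by
    rintro ⟨b₁, x, hx, rfl⟩ ⟨b₂, y, hy, rfl⟩ h
    have hagree : ∀ a : Fin n, ((a : ℕ) : ℤ) ∉ U → x ((a : ℕ) : ℤ) = y ((a : ℕ) : ℤ) := by
      intro a ha
      exact congrFun h ⟨a, by simp [hS, ha]⟩
    apply Subtype.ext
    funext a
    exact key x hx y hy hagree (rk ((a : ℕ) : ℤ)) _ (by positivity) (by exact_mod_cast a.2) le_rfl
  have h1 : Nat.card ↥T ≤ Nat.card (↥S → Q) := Nat.card_le_card_of_injective _ hinj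
  have h2 : Nat.card (↥S → Q) = Fintype.card Q ^ S.card := by
    simp [Nat.card_eq_fintype_card, Fintype.card_fun]
  have hcard : (Finset.univ.filter (fun a : Fin n => ((a : ℕ) : ℤ) ∈ U)).card = U.card := by
    refine Finset.card_bij (fun a _ => ((a : ℕ) : ℤ)) ?_ ?_ ?_
    · intro a ha; simpa using ha
    · intro a _ b _ hab
      exact Fin.ext (by exact_mod_cast hab)
    · intro u hu
      obtain ⟨h0, h1⟩ := hUsub u hu
      exact ⟨⟨u.toNat, by omega⟩, by simp [Int.toNat_of_nonneg h0, hu], by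
        simp [Int.toNat_of_nonneg h0]⟩
  have h3 : S.card = n - U.card := by
    rw [hS, Finset.card_sdiff_of_subset (Finset.filter_subset _ _), hcard]
    simp
  calc blockCount X n = Nat.card ↥T := rfl
    _ ≤ Fintype.card Q ^ S.card := by rw [← h2]; exact h1
    _ = Fintype.card Q ^ (n - U.card) := by rw [h3]

lemma toNat_lt_toNat' {a b : ℤ} (h0 : 0 ≤ a) (h1 : a < b) : a.toNat < b.toNat := by omega

lemma blockCount_le_main {l r q : ℕ} (hl : 1 ≤ l) (hr : 1 ≤ r)
    {Q : Type*} [Fintype Q] (hcard : Fintype.card Q = q) {X : Set (ℤ → Q)}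
    (hX : IsRecoverable {j : ℤ | (1 ≤ j ∧ j ≤ (r : ℤ)) ∨ (-(l : ℤ) ≤ j ∧ j ≤ -1)} X)
    (n : ℕ) :
    blockCount X n ≤ q ^ (n - (n - (l + r)) / (min l r + 1)) := by
  classical
  set m := min l r with hmdef
  set M := m + 1 with hMdef
  set c := (n - (l + r)) / M with hcdef
  have hM1 : 1 ≤ M := by omega
  have hMc : (M : ℤ) = (m : ℤ) + 1 := by rw [hMdef]; push_cast; ring
  have hc2 : c * M ≤ n - (l + r) := Nat.div_mul_le_self _ _
  have hkey : ∀ k : ℕ, k < c → k * M + M + (l + r) ≤ n := by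
    intro k hk
    have h1 : k * M + M ≤ c * M := by
      have := Nat.mul_le_mul_right M (Nat.succ_le_of_lt hk)
      rwa [Nat.succ_mul] at this
    have h3 : k * M + M ≤ n - (l + r) := h1.trans hc2
    have h4 : l + r ≤ n := by
      by_contra h
      have h5 : n - (l + r) = 0 := Nat.sub_eq_zero_of_le (by omega)
      rw [h5] at h3
      have : M ≤ 0 := le_trans (Nat.le_add_left M _) h3
      omega
    obtain ⟨t, ht⟩ : ∃ t, k * M = t := ⟨_, rfl⟩
    rw [ht] at h3 ⊢
    omega
  have hMz : ((M : ℤ)) ≠ 0 := by omega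
  by_cases hlr : r ≤ l
  · -- m = r : unknowns at l + k*M, recover left-to-right
    have hm : m = r := min_eq_right hlr
    set U : Finset ℤ := (Finset.range c).image (fun k : ℕ => ((l : ℤ) + k * M)) with hUdef
    have hUmem : ∀ i, i ∈ U ↔ ∃ k, k < c ∧ (l : ℤ) + k * M = i := by
      intro i; simp [hUdef, Finset.mem_image, Finset.mem_range]
    have hUcard : U.card = c := by
      rw [hUdef, Finset.card_image_of_injective, Finset.card_range]
      intro a b hab
      simp only at hab
      have : (a : ℤ) = b := by
        have := mul_right_cancel₀ hMz (by linarith : (a : ℤ) * M = b * M)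
        exact this
      exact_mod_cast this
    have hb := blockCount_le_pow hX n U Int.toNat ?_ ?_
    · rwa [hUcard, hcard] at hb
    · rintro i hi
      obtain ⟨k, hk, rfl⟩ := (hUmem i).1 hi
      have H : (k : ℤ) * M + M + (l + r) ≤ n := by exact_mod_cast hkey k hk
      have hkM : (0 : ℤ) ≤ (k : ℤ) * (M : ℤ) := by positivity
      constructor
      · positivity
      · linarith
    · rintro i hi j hj
      obtain ⟨k, hk, rfl⟩ := (hUmem i).1 hi
      have H : (k : ℤ) * M + M + (l + r) ≤ n := by exact_mod_cast hkey k hk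
      have hkM : (0 : ℤ) ≤ (k : ℤ) * (M : ℤ) := by positivity
      have hmr : ((m : ℕ) : ℤ) = (r : ℤ) := by exact_mod_cast hm
      rcases hj with ⟨hj1, hj2⟩ | ⟨hj1, hj2⟩
      · refine ⟨by linarith, by linarith, ?_⟩
        intro hmem
        exfalso
        obtain ⟨k', _, hEq⟩ := (hUmem _).1 hmem
        have hj' : (j : ℤ) = ((k' : ℤ) - (k : ℤ)) * (M : ℤ) := by
          have : (k' : ℤ) * M = (k : ℤ) * M + j := by linarith
          linarith [this]
        rcases lt_trichotomy (k : ℤ) (k' : ℤ) with h | h | h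
        · have h1 : (1 : ℤ) ≤ (k' : ℤ) - k := by omega
          have := mul_le_mul_of_nonneg_right h1 (by positivity : (0:ℤ) ≤ (M:ℤ))
          rw [one_mul] at this
          linarith
        · rw [← h] at hj'; simp at hj'; linarith
        · have h1 : (k' : ℤ) - k ≤ -1 := by omega
          have := mul_le_mul_of_nonneg_right h1 (by positivity : (0:ℤ) ≤ (M:ℤ))
          rw [neg_one_mul] at this
          linarith
      · have hpos : (0:ℤ) ≤ (k : ℤ) * M := by positivity
        refine ⟨by linarith, by linarith, ?_⟩
        intro _
        exact toNat_lt_toNat' (by linarith) (by linarith)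
  · -- m = l : unknowns at n - 1 - r - k*M, recover right-to-left
    push_neg at hlr
    have hm : m = l := min_eq_left (le_of_lt hlr)
    set U : Finset ℤ := (Finset.range c).image
      (fun k : ℕ => ((n : ℤ) - 1 - r - k * M)) with hUdef
    have hUmem : ∀ i, i ∈ U ↔ ∃ k, k < c ∧ (n : ℤ) - 1 - r - k * M = i := by
      intro i; simp [hUdef, Finset.mem_image, Finset.mem_range]
    have hUcard : U.card = c := by
      rw [hUdef, Finset.card_image_of_injective, Finset.card_range]
      intro a b hab
      simp only at hab
      have : (a : ℤ) = b := by
        have := mul_right_cancel₀ hMz (by linarith : (a : ℤ) * M = b * M)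
        exact this
      exact_mod_cast this
    have hb := blockCount_le_pow hX n U (fun z => ((n : ℤ) - z).toNat) ?_ ?_
    · rwa [hUcard, hcard] at hb
    · rintro i hi
      obtain ⟨k, hk, rfl⟩ := (hUmem i).1 hi
      have H : (k : ℤ) * M + M + (l + r) ≤ n := by exact_mod_cast hkey k hk
      have hkM : (0 : ℤ) ≤ (k : ℤ) * (M : ℤ) := by positivity
      constructor
      · linarith
      · linarith
    · rintro i hi j hj
      obtain ⟨k, hk, rfl⟩ := (hUmem i).1 hi
      have H : (k : ℤ) * M + M + (l + r) ≤ n := by exact_mod_cast hkey k hk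
      have hkM : (0 : ℤ) ≤ (k : ℤ) * (M : ℤ) := by positivity
      have hml : ((m : ℕ) : ℤ) = (l : ℤ) := by exact_mod_cast hm
      rcases hj with ⟨hj1, hj2⟩ | ⟨hj1, hj2⟩
      · refine ⟨by linarith, by linarith, ?_⟩
        intro _
        apply toNat_lt_toNat' (by linarith) (by linarith)
      · refine ⟨by linarith, by linarith, ?_⟩
        intro hmem
        exfalso
        obtain ⟨k', _, hEq⟩ := (hUmem _).1 hmem
        have hj' : (j : ℤ) = ((k : ℤ) - (k' : ℤ)) * (M : ℤ) := by
          have : (k' : ℤ) * M = (k : ℤ) * M - j := by linarith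
          linarith [this]
        rcases lt_trichotomy (k : ℤ) (k' : ℤ) with h | h | h
        · have h1 : (k : ℤ) - k' ≤ -1 := by omega
          have := mul_le_mul_of_nonneg_right h1 (by positivity : (0:ℤ) ≤ (M:ℤ))
          rw [neg_one_mul] at this
          linarith
        · rw [← h] at hj'; simp at hj'; linarith
        · have h1 : (1 : ℤ) ≤ (k : ℤ) - k' := by omega
          have := mul_le_mul_of_nonneg_right h1 (by positivity : (0:ℤ) ≤ (M:ℤ))
          rw [one_mul] at this
          linarith

lemma logb_blockCount_le {q : ℕ} (hq : 2 ≤ q) {Q : Type*} {X : Set (ℤ → Q)}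
    {n e : ℕ} (hb : blockCount X n ≤ q ^ e) :
    Real.logb q (blockCount X n) ≤ (e : ℝ) := by
  have hq1 : (1 : ℝ) < q := by exact_mod_cast hq
  rcases Nat.eq_zero_or_pos (blockCount X n) with h | h
  · simp [h]
  · calc Real.logb q (blockCount X n) ≤ Real.logb q ((q : ℝ) ^ e) :=
        Real.logb_le_logb_of_le hq1 (by exact_mod_cast h) (by exact_mod_cast hb)
      _ = e := by
        rw [Real.logb_pow, Real.logb_self_eq_one hq1, mul_one]

lemma rate_le_target {l r q : ℕ} (hl : 1 ≤ l) (hr : 1 ≤ r) (hq : 2 ≤ q)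
    {Q : Type*} [Fintype Q] (hcard : Fintype.card Q = q) {X : Set (ℤ → Q)}
    (hX : IsRecoverable {j : ℤ | (1 ≤ j ∧ j ≤ (r : ℤ)) ∨ (-(l : ℤ) ≤ j ∧ j ≤ -1)} X) :
    rate q X ≤ ((min l r : ℕ) : ℝ) / (((min l r : ℕ) : ℝ) + 1) := by
  classical
  set m := min l r with hmdef
  set M := m + 1 with hMdef
  have hq1 : (1 : ℝ) < q := by exact_mod_cast hq
  have hMR : (0 : ℝ) < (M : ℝ) := by positivity
  set K : ℝ := (l : ℝ) + r + M with hKdef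
  have hK0 : (0 : ℝ) ≤ K := by positivity
  set a : ℕ → ℝ := fun n => Real.logb q (blockCount X n) / n with hadef
  set b : ℕ → ℝ := fun n => (m : ℝ) / M + K / n with hbdef
  have ha0 : ∀ n, 0 ≤ a n := by
    intro n
    apply div_nonneg _ (Nat.cast_nonneg n)
    rcases Nat.eq_zero_or_pos (blockCount X n) with h | h
    · simp [h]
    · exact Real.logb_nonneg hq1 (by exact_mod_cast h)
  have hlogb : ∀ n : ℕ, Real.logb q (blockCount X n) ≤ ((n - (n - (l + r)) / M : ℕ) : ℝ) :=
    fun n => logb_blockCount_le hq (blockCount_le_main hl hr hcard hX n)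
  have hEstim : ∀ n : ℕ, ((n - (n - (l + r)) / M : ℕ) : ℝ) ≤ (m : ℝ) / M * n + K := by
    intro n
    set d := (n - (l + r)) / M with hddef
    have hd_le : d ≤ n := le_trans (Nat.div_le_self _ _) (Nat.sub_le _ _)
    have hcast : ((n - d : ℕ) : ℝ) = (n : ℝ) - d := by
      rw [Nat.cast_sub hd_le]
    have hdM : (n : ℝ) - ((l : ℝ) + r) - ((M : ℝ) - 1) ≤ (d : ℝ) * M := by
      have h1 : (((n - (l + r)) : ℕ) : ℝ) ≥ (n : ℝ) - ((l : ℝ) + r) := by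
        rcases le_total (l + r) n with h | h
        · rw [Nat.cast_sub h]; push_cast; linarith
        · have : n - (l + r) = 0 := Nat.sub_eq_zero_of_le h
          rw [this]
          have : (n : ℝ) ≤ (l : ℝ) + r := by exact_mod_cast h
          simp; linarith
      have h2 := Nat.div_add_mod (n - (l + r)) M
      have h3 : (n - (l + r)) % M < M := Nat.mod_lt _ (by omega)
      have h2' : (M : ℝ) * d + (((n - (l + r)) % M : ℕ) : ℝ) = (((n - (l + r)) : ℕ) : ℝ) := by
        exact_mod_cast h2
      have h3' : (((n - (l + r)) % M : ℕ) : ℝ) + 1 ≤ M := by exact_mod_cast h3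
      nlinarith
    rw [hcast]
    have hMm : (M : ℝ) = (m : ℝ) + 1 := by rw [hMdef]; push_cast; ring
    have hKK : K ≤ K * M := by nlinarith
    have hgoal : ((n : ℝ) - d) * M ≤ (m : ℝ) * n + K * M := by nlinarith
    calc (n : ℝ) - d = ((n : ℝ) - d) * M / M := by field_simp
      _ ≤ ((m : ℝ) * n + K * M) / M := by gcongr
      _ = (m : ℝ) / M * n + K := by
          rw [add_div, mul_div_cancel_right₀ _ (ne_of_gt hMR), div_mul_eq_mul_div]
  have hab : a ≤ᶠ[Filter.atTop] b := by
    filter_upwards [Filter.eventually_ge_atTop 1] with n hn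
    have hn0 : (0 : ℝ) < n := by exact_mod_cast hn
    rw [hadef, hbdef]
    simp only
    rw [div_le_iff₀ hn0, show ((m : ℝ) / M + K / n) * n = (m : ℝ) / M * n + K by
      field_simp]
    exact le_trans (hlogb n) (hEstim n)
  have hcb : Filter.IsCoboundedUnder (· ≤ ·) Filter.atTop a :=
    Filter.isCoboundedUnder_le_of_le Filter.atTop (x := 0) ha0
  have hbb : Filter.IsBoundedUnder (· ≤ ·) Filter.atTop b := by
    refine Filter.isBoundedUnder_of ⟨(m : ℝ) / M + K, fun n => ?_⟩
    rcases Nat.eq_zero_or_pos n with h | h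
    · simp [hbdef, h, hK0]
    · have : K / n ≤ K := by
        apply div_le_self hK0
        exact_mod_cast h
      simp only [hbdef]
      linarith
  have hblim : Filter.limsup b Filter.atTop = (m : ℝ) / M := by
    have : Filter.Tendsto b Filter.atTop (nhds ((m : ℝ) / M + 0)) :=
      Filter.Tendsto.add tendsto_const_nhds (tendsto_const_div_atTop_nhds_zero_nat K)
    rw [add_zero] at this
    exact this.limsup_eq
  calc rate q X = Filter.limsup a Filter.atTop := rfl
    _ ≤ Filter.limsup b Filter.atTop := Filter.limsup_le_limsup hab hcb hbb
    _ = (m : ℝ) / M := hblim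
    _ = ((min l r : ℕ) : ℝ) / (((min l r : ℕ) : ℝ) + 1) := by
      simp only [hMdef, hmdef]; push_cast; ring

lemma blockCount_le_total {Q : Type*} [Fintype Q] (X : Set (ℤ → Q)) (n : ℕ) :
    blockCount X n ≤ Fintype.card Q ^ n := by
  have h : Nat.card ↥((fun x : ℤ → Q => fun i : Fin n => x ((i : ℕ) : ℤ)) '' X)
      ≤ Nat.card (Fin n → Q) := Nat.card_le_card_of_injective _ Subtype.val_injective
  rw [Nat.card_eq_fintype_card (α := Fin n → Q), Fintype.card_fun, Fintype.card_fin] at h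
  exact h

lemma witness_exists (l r q : ℕ) (hl : 1 ≤ l) (hr : 1 ≤ r) (hq : 2 ≤ q) :
    ∃ X : Set (ℤ → ZMod q),
      IsRecoverable {j : ℤ | (1 ≤ j ∧ j ≤ (r : ℤ)) ∨ (-(l : ℤ) ≤ j ∧ j ≤ -1)} X ∧
      ∀ n : ℕ, q ^ (n - n / (min l r + 1)) ≤ blockCount X n := by
  classical
  haveI : NeZero q := ⟨by omega⟩
  set m := min l r with hmdef
  set M := m + 1 with hMdef
  have hml : m ≤ l := min_le_left _ _
  have hmr : m ≤ r := min_le_right _ _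
  have hMZ : (0 : ℤ) < (M : ℤ) := by positivity
  have hblock : ∀ (k : ℤ) (t : ℕ), t < M →
      ((M : ℤ) * k + t) / M = k ∧ ((M : ℤ) * k + t) % M = t := by
    intro k t ht
    constructor
    · rw [add_comm, Int.add_mul_ediv_left _ _ (ne_of_gt hMZ),
        Int.ediv_eq_zero_of_lt (by positivity) (by exact_mod_cast ht), zero_add]
    · rw [add_comm, Int.add_mul_emod_self_left,
        Int.emod_eq_of_lt (by positivity) (by exact_mod_cast ht)]
  set X : Set (ℤ → ZMod q) :=
    {x : ℤ → ZMod q | ∀ k : ℤ, ∑ t ∈ Finset.range M, x ((M : ℤ) * k + t) = 0} with hXdef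
  have hrec : IsRecoverable {j : ℤ | (1 ≤ j ∧ j ≤ (r : ℤ)) ∨ (-(l : ℤ) ≤ j ∧ j ≤ -1)} X := by
    intro i
    have h0 : 0 ≤ i % M := Int.emod_nonneg i (ne_of_gt hMZ)
    have h1 : i % M < M := Int.emod_lt_of_pos i hMZ
    set o : ℕ := (i % M).toNat with hodef
    have hoM : o < M := by omega
    have hocast : (o : ℤ) = i % M := Int.toNat_of_nonneg h0
    have hio : (M : ℤ) * (i / M) + o = i := by
      rw [hocast]; exact Int.mul_ediv_add_emod i M
    refine ⟨fun x => -∑ t ∈ (Finset.range M).erase o, x ((M : ℤ) * (i / M) + t), ?_, ?_⟩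
    · intro x y hxy
      refine neg_inj.2 (Finset.sum_congr rfl ?_)
      intro t ht
      have hto : t ≠ o := (Finset.mem_erase.1 ht).1
      have htM : t < M := Finset.mem_range.1 (Finset.mem_erase.1 ht).2
      set j : ℤ := (M : ℤ) * (i / M) + t - i with hjdef
      have hji : (M : ℤ) * (i / M) + t = i + j := by rw [hjdef]; ring
      have hjo : j = (t : ℤ) - o := by rw [hjdef]; linarith [hio]
      have hjR : (1 ≤ j ∧ j ≤ (r : ℤ)) ∨ (-(l : ℤ) ≤ j ∧ j ≤ -1) := by omega
      rw [hji]
      exact hxy j hjR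
    · intro x hx
      have hsum := hx (i / M)
      have hin : o ∈ Finset.range M := Finset.mem_range.2 hoM
      have hkey := Finset.sum_erase_add (Finset.range M)
        (fun t : ℕ => x ((M : ℤ) * (i / M) + t)) hin
      rw [hsum] at hkey
      have hxi : x i = x ((M : ℤ) * (i / M) + (o : ℤ)) := by rw [hio]
      rw [hxi]
      linear_combination -hkey
  refine ⟨X, hrec, ?_⟩
  intro n
  set T := ((fun x : ℤ → ZMod q => fun i : Fin n => x ((i : ℕ) : ℤ)) '' X) with hTdef
  set P : Fin n → Prop := fun a => ∃ k, k < n / M ∧ (a : ℕ) = k * M + m with hPdef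
  set Fs : Finset (Fin n) := Finset.univ.filter (fun a => ¬ P a) with hFsdef
  -- the extension construction
  have main : ∀ h : (↥Fs → ZMod q), ∃ x : ℤ → ZMod q, x ∈ X ∧
      ∀ s : ↥Fs, x (((s.1 : ℕ) : ℤ)) = h s := by
    intro h
    set G : Fin n → ZMod q := fun a => if ha : a ∈ Fs then h ⟨a, ha⟩ else 0 with hGdef
    set g : ℤ → ZMod q := fun i =>
      if hin : 0 ≤ i ∧ i < (n : ℤ) then G ⟨i.toNat, by omega⟩ else 0 with hgdef
    set xh : ℤ → ZMod q := fun i =>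
      if (i % M).toNat = (if i / M < 0 then 0 else m) then
        -∑ t ∈ (Finset.range M).erase (if i / M < 0 then 0 else m),
          g ((M : ℤ) * (i / M) + t)
      else g i with hxhdef
    have hxval : ∀ (k : ℤ) (t : ℕ), t < M →
        xh ((M : ℤ) * k + t) =
          if t = (if k < 0 then 0 else m) then
            -∑ s ∈ (Finset.range M).erase (if k < 0 then 0 else m),
              g ((M : ℤ) * k + s)
          else g ((M : ℤ) * k + t) := by
      intro k t ht
      obtain ⟨hdiv, hmod⟩ := hblock k t ht
      simp only [hxhdef, hdiv, hmod, Int.toNat_natCast]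
    have hxmem : xh ∈ X := by
      intro k
      set a : ℕ := if k < 0 then 0 else m with hadef
      have haM : a < M := by rw [hadef]; split_ifs <;> omega
      have hain : a ∈ Finset.range M := Finset.mem_range.2 haM
      rw [← Finset.sum_erase_add _ _ hain]
      have h1 : ∀ t ∈ (Finset.range M).erase a, xh ((M : ℤ) * k + t) = g ((M : ℤ) * k + t) := by
        intro t ht
        rw [hxval k t (Finset.mem_range.1 (Finset.mem_erase.1 ht).2)]
        rw [if_neg]
        exact (Finset.mem_erase.1 ht).1
      have h2 : xh ((M : ℤ) * k + a) =
          -∑ s ∈ (Finset.range M).erase a, g ((M : ℤ) * k + s) := by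
        rw [hxval k a haM, if_pos rfl]
      rw [Finset.sum_congr rfl h1, h2]
      ring
    refine ⟨xh, hxmem, ?_⟩
    intro s
    obtain ⟨a, ha⟩ := s
    have hnP : ¬ P a := (Finset.mem_filter.1 ha).2
    set i : ℤ := ((a : ℕ) : ℤ) with hidef
    have hi0 : 0 ≤ i := by positivity
    have hin : i < (n : ℤ) := by rw [hidef]; exact_mod_cast a.2
    have hk0 : 0 ≤ i / M := Int.ediv_nonneg hi0 (le_of_lt hMZ)
    have hcond : ¬ ((i % M).toNat = (if i / M < 0 then 0 else m)) := by
      rw [if_neg (not_lt.2 hk0)]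
      intro hcnd
      apply hnP
      have hm0 : 0 ≤ i % M := Int.emod_nonneg i (ne_of_gt hMZ)
      have him : i % M = (m : ℤ) := by omega
      have hdm := Int.mul_ediv_add_emod i M
      set k : ℕ := (i / M).toNat with hkdef
      have hk : (i / M) = (k : ℤ) := (Int.toNat_of_nonneg hk0).symm
      have h5 : i = (M : ℤ) * (i / M) + (m : ℤ) := by rw [← him]; linarith [hdm]
      have h6 : i = (k : ℤ) * M + m := by rw [hk] at h5; linarith [h5]
      have hieq : (a : ℕ) = k * M + m := by
        rw [hidef] at h6; exact_mod_cast h6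
      have hkn : k < n / M := by
        have haln : (a : ℕ) < n := a.2
        rw [hieq] at haln
        have h7 : (k + 1) * M ≤ n := by
          rw [add_mul, one_mul]
          obtain ⟨t, ht⟩ : ∃ t, k * M = t := ⟨_, rfl⟩
          rw [ht] at haln ⊢
          omega
        have h8 := (Nat.le_div_iff_mul_le (by omega : 0 < M)).2 h7
        omega
      exact ⟨k, hkn, hieq⟩
    show xh i = h ⟨a, ha⟩
    have : xh i = g i := by
      simp only [hxhdef]
      rw [if_neg hcond]
    rw [this, hgdef]
    simp only
    rw [dif_pos ⟨hi0, hin⟩]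
    have haeq : (⟨i.toNat, by omega⟩ : Fin n) = a := by
      apply Fin.ext
      simp [hidef]
    rw [haeq, hGdef]
    simp only
    rw [dif_pos ha]
  -- injectivity and counting
  have hinj : ∃ Ψ : (↥Fs → ZMod q) → ↥T, Function.Injective Ψ := by
    choose x hxX hxval using main
    refine ⟨fun h => ⟨fun i : Fin n => x h ((i : ℕ) : ℤ), ⟨x h, hxX h, rfl⟩⟩, ?_⟩
    intro h h' hhh
    funext s
    have := congrFun (congrArg Subtype.val hhh) s.1
    simp only at this
    rw [← hxval h s, ← hxval h' s]
    exact this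
  obtain ⟨Ψ, hΨ⟩ := hinj
  have hc1 : Nat.card (↥Fs → ZMod q) ≤ Nat.card ↥T :=
    Nat.card_le_card_of_injective Ψ hΨ
  have hc2 : Nat.card (↥Fs → ZMod q) = q ^ Fs.card := by
    simp [Nat.card_eq_fintype_card, Fintype.card_fun, ZMod.card]
  have hc3 : n - n / M ≤ Fs.card := by
    have hsplit := Finset.card_filter_add_card_filter_not
      (s := (Finset.univ : Finset (Fin n))) (p := P)
    have hPcard : (Finset.univ.filter P).card ≤ n / M := by
      have := Finset.card_le_card_of_injOn (fun a : Fin n => ((a : ℕ) - m) / M)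
        (s := Finset.univ.filter P) (t := Finset.range (n / M)) ?_ ?_
      · simpa using this
      · intro a ha
        obtain ⟨k, hk, hke⟩ := (Finset.mem_filter.1 ha).2
        simp only [Finset.mem_coe, Finset.mem_range]
        show ((a : ℕ) - m) / M < n / M
        rw [hke, Nat.add_sub_cancel, Nat.mul_div_cancel _ (by omega : 0 < M)]
        exact hk
      · intro a ha b hb hab
        obtain ⟨k, hk, hke⟩ := (by simpa using ha : P a)
        obtain ⟨k', hk', hke'⟩ := (by simpa using hb : P b)
        have hab' : ((a : ℕ) - m) / M = ((b : ℕ) - m) / M := hab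
        rw [hke, hke', Nat.add_sub_cancel, Nat.add_sub_cancel,
          Nat.mul_div_cancel _ (by omega : 0 < M),
          Nat.mul_div_cancel _ (by omega : 0 < M)] at hab'
        apply Fin.ext
        rw [hke, hke', hab']
    simp only [Finset.card_univ, Fintype.card_fin] at hsplit
    rw [hFsdef]
    omega
  calc q ^ (n - n / M) ≤ q ^ Fs.card := Nat.pow_le_pow_right (by omega) hc3
    _ = Nat.card (↥Fs → ZMod q) := hc2.symm
    _ ≤ Nat.card ↥T := hc1
    _ = blockCount X n := rfl

lemma witness_rate (l r q : ℕ) (hl : 1 ≤ l) (hr : 1 ≤ r) (hq : 2 ≤ q) :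
    ∃ X : Set (ℤ → ZMod q),
      IsRecoverable {j : ℤ | (1 ≤ j ∧ j ≤ (r : ℤ)) ∨ (-(l : ℤ) ≤ j ∧ j ≤ -1)} X ∧
      rate q X = ((min l r : ℕ) : ℝ) / (((min l r : ℕ) : ℝ) + 1) := by
  classical
  haveI : NeZero q := ⟨by omega⟩
  obtain ⟨X, hrec, hlow⟩ := witness_exists l r q hl hr hq
  have hcard : Fintype.card (ZMod q) = q := ZMod.card q
  refine ⟨X, hrec, le_antisymm (rate_le_target hl hr hq hcard hrec) ?_⟩
  set m := min l r with hmdef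
  set M := m + 1 with hMdef
  have hq1 : (1 : ℝ) < q := by exact_mod_cast hq
  have hq0 : (0 : ℝ) < q := by positivity
  have hMR : (0 : ℝ) < (M : ℝ) := by positivity
  have hMm : (M : ℝ) = (m : ℝ) + 1 := by rw [hMdef]; push_cast; ring
  set a : ℕ → ℝ := fun n => Real.logb q (blockCount X n) / n with hadef
  have halow : ∀ n : ℕ, 1 ≤ n → (m : ℝ) / M ≤ a n := by
    intro n hn
    have hn0 : (0 : ℝ) < n := by exact_mod_cast hn
    have hdn : n / M ≤ n := Nat.div_le_self _ _
    have hstep1 : (m : ℝ) / M * n ≤ ((n - n / M : ℕ) : ℝ) := by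
      rw [Nat.cast_sub hdn]
      have h1 : ((n / M : ℕ) : ℝ) ≤ (n : ℝ) / (M : ℝ) := Nat.cast_div_le
      have key : (m : ℝ) / M * (n : ℝ) = (n : ℝ) - (n : ℝ) / M := by
        rw [hMm]; field_simp; ring
      rw [key]
      linarith
    have hstep2 : ((n - n / M : ℕ) : ℝ) ≤ Real.logb q (blockCount X n) := by
      have hb := hlow n
      have hpow : (0 : ℝ) < ((q ^ (n - n / M) : ℕ) : ℝ) := by positivity
      have h2 : Real.logb q ((q ^ (n - n / M) : ℕ) : ℝ) ≤
          Real.logb q (blockCount X n) :=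
        Real.logb_le_logb_of_le hq1 hpow (by exact_mod_cast hb)
      have h3 : Real.logb q ((q ^ (n - n / M) : ℕ) : ℝ) = ((n - n / M : ℕ) : ℝ) := by
        rw [show ((q ^ (n - n / M) : ℕ) : ℝ) = (q : ℝ) ^ (n - n / M : ℕ) by push_cast; ring,
          Real.logb_pow, Real.logb_self_eq_one hq1, mul_one]
      linarith
    rw [hadef]
    simp only
    rw [le_div_iff₀ hn0]
    linarith
  have hbdd : Filter.IsBoundedUnder (· ≤ ·) Filter.atTop a := by
    refine Filter.isBoundedUnder_of ⟨1, fun n => ?_⟩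
    rcases Nat.eq_zero_or_pos n with h | h
    · subst h
      simp [hadef]
    · have hn0 : (0 : ℝ) < n := by exact_mod_cast h
      have hb : blockCount X n ≤ q ^ n := by
        have := blockCount_le_total X n
        rwa [hcard] at this
      have := logb_blockCount_le hq hb
      rw [hadef]
      simp only
      rw [div_le_one hn0]
      exact this
  have hfin : (m : ℝ) / M ≤ Filter.limsup a Filter.atTop :=
    Filter.le_limsup_of_frequently_le
      (((Filter.eventually_ge_atTop 1).mono halow).frequently) hbdd
  calc ((m : ℕ) : ℝ) / (((m : ℕ) : ℝ) + 1) = (m : ℝ) / M := by rw [← hMm]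
    _ ≤ Filter.limsup a Filter.atTop := hfin
    _ = rate q X := rfl

theorem stmt7 (l r : ℕ) (hl : 1 ≤ l) (hr : 1 ≤ r) (q : ℕ) (hq : 2 ≤ q) :
    sSup {x : ℝ | ∃ (Q : Type) (_ : Fintype Q), Fintype.card Q = q ∧
        ∃ X : Set (ℤ → Q),
          IsRecoverable {j : ℤ | (1 ≤ j ∧ j ≤ (r : ℤ)) ∨ (-(l : ℤ) ≤ j ∧ j ≤ -1)} X ∧
          rate q X = x} =
      (min l r : ℝ) / ((min l r : ℝ) + 1) := by
  classical
  haveI : NeZero q := ⟨by omega⟩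
  have htgt : (min l r : ℝ) / ((min l r : ℝ) + 1) =
      ((min l r : ℕ) : ℝ) / (((min l r : ℕ) : ℝ) + 1) := by
    push_cast
    ring
  set tgt : ℝ := ((min l r : ℕ) : ℝ) / (((min l r : ℕ) : ℝ) + 1) with htgtdef
  set S : Set ℝ := {x : ℝ | ∃ (Q : Type) (_ : Fintype Q), Fintype.card Q = q ∧
      ∃ X : Set (ℤ → Q),
        IsRecoverable {j : ℤ | (1 ≤ j ∧ j ≤ (r : ℤ)) ∨ (-(l : ℤ) ≤ j ∧ j ≤ -1)} X ∧
        rate q X = x} with hSdef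
  have hub : ∀ x ∈ S, x ≤ tgt := by
    rintro x ⟨Q, hF, hcard, X, hrec, rfl⟩
    exact rate_le_target hl hr hq hcard hrec
  have hmem : tgt ∈ S := by
    obtain ⟨X, hrec, hrate⟩ := witness_rate l r q hl hr hq
    exact ⟨ZMod q, inferInstance, ZMod.card q, X, hrec, hrate⟩
  rw [htgt]
  exact le_antisymm (csSup_le ⟨tgt, hmem⟩ hub) (le_csSup ⟨tgt, hub⟩ hmem)
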